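/- arXiv:1405.4844 — 4 statements merged into one kernel-verified Lean document; each statement's English description precedes it below -/
import Mathlib

section
/- Let H be a complex Hilbert space, let A be a bounded linear operator on H that is *-paranormal (i.e. ‖A*x‖² ≤ ‖A²x‖·‖x‖ for all x ∈ H), and let U be a unitary operator on H. Suppose X is a bounded linear operator on H of Hilbert–Schmidt class (i.e. for some Hilbert basis (eₙ) of H one has ∑ₙ ‖X eₙ‖² < ∞) such that A X = X U. Then A* X = X U*. -/
open ContinuousLinearMap
open scoped ENNReal NNReal

section Aux

variable {H : Type*} [NormedAddCommGroup H] [InnerProductSpace ℂ H] [CompleteSpace H]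

local notation "⟪" x ", " y "⟫" => @inner ℂ _ _ x y

private lemma parseval_hasSum (b : HilbertBasis ℕ ℂ H) (x : H) :
    HasSum (fun m => ‖⟪b m, x⟫‖ ^ 2) (‖x‖ ^ 2) := by
  have h := b.hasSum_inner_mul_inner x x
  have e : (fun m => (⟪x, b m⟫ * ⟪b m, x⟫ : ℂ)) = fun m => ((‖⟪b m, x⟫‖ ^ 2 : ℝ) : ℂ) := by
    funext m
    rw [← inner_conj_symm x (b m), RCLike.conj_mul]
    norm_cast
  have hx : (⟪x, x⟫ : ℂ) = ((‖x‖ ^ 2 : ℝ) : ℂ) := by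
    rw [inner_self_eq_norm_sq_to_K]; norm_cast
  rw [e, hx] at h
  exact Complex.hasSum_ofReal.mp h

private lemma parseval_enn (b : HilbertBasis ℕ ℂ H) (x : H) :
    ∑' m, (‖⟪b m, x⟫‖₊ : ℝ≥0∞) ^ 2 = (‖x‖₊ : ℝ≥0∞) ^ 2 := by
  have h := parseval_hasSum b x
  have h' : HasSum (fun m => (‖⟪b m, x⟫‖₊ ^ 2 : ℝ≥0)) (‖x‖₊ ^ 2) := by
    rw [← NNReal.hasSum_coe]
    convert h using 1 <;> push_cast [coe_nnnorm] <;> rfl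
  calc ∑' m, (‖⟪b m, x⟫‖₊ : ℝ≥0∞) ^ 2
      = ∑' m, ((‖⟪b m, x⟫‖₊ ^ 2 : ℝ≥0) : ℝ≥0∞) := by
        refine tsum_congr fun m => ?_; push_cast; ring
    _ = ((‖x‖₊ ^ 2 : ℝ≥0) : ℝ≥0∞) := ENNReal.tsum_coe_eq h'
    _ = (‖x‖₊ : ℝ≥0∞) ^ 2 := by push_cast; ring

private lemma hs_swap (b : HilbertBasis ℕ ℂ H) (T : H →L[ℂ] H) :
    ∑' n, (‖T (b n)‖₊ : ℝ≥0∞) ^ 2 = ∑' n, (‖adjoint T (b n)‖₊ : ℝ≥0∞) ^ 2 := by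
  calc ∑' n, (‖T (b n)‖₊ : ℝ≥0∞) ^ 2
      = ∑' n, ∑' m, (‖⟪b m, T (b n)⟫‖₊ : ℝ≥0∞) ^ 2 :=
        tsum_congr fun n => (parseval_enn b _).symm
    _ = ∑' m, ∑' n, (‖⟪b m, T (b n)⟫‖₊ : ℝ≥0∞) ^ 2 := ENNReal.tsum_comm
    _ = ∑' m, ∑' n, (‖⟪b n, adjoint T (b m)⟫‖₊ : ℝ≥0∞) ^ 2 := by
        refine tsum_congr fun m => tsum_congr fun n => ?_
        congr 2
        have h : ⟪b m, T (b n)⟫ = ⟪adjoint T (b m), b n⟫ := (adjoint_inner_left T _ _).symm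
        refine NNReal.coe_injective ?_
        simp only [coe_nnnorm]
        rw [h, norm_inner_symm]
    _ = ∑' m, (‖adjoint T (b m)‖₊ : ℝ≥0∞) ^ 2 := tsum_congr fun m => parseval_enn b _

private lemma summable_tsum_of_enn_eq {f g : ℕ → ℝ≥0}
    (h : ∑' n, (f n : ℝ≥0∞) = ∑' n, (g n : ℝ≥0∞)) (hg : Summable g) :
    Summable f ∧ ∑' n, (f n : ℝ) = ∑' n, (g n : ℝ) := by
  have hfin : ∑' n, (f n : ℝ≥0∞) ≠ ⊤ := by
    rw [h]; exact ENNReal.tsum_coe_ne_top_iff_summable.mpr hg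
  have hf : Summable f := ENNReal.tsum_coe_ne_top_iff_summable.mp hfin
  refine ⟨hf, ?_⟩
  have : ((∑' n, f n : ℝ≥0) : ℝ≥0∞) = ((∑' n, g n : ℝ≥0) : ℝ≥0∞) := by
    rw [ENNReal.coe_tsum hf, ENNReal.coe_tsum hg, h]
  have h2 : (∑' n, f n : ℝ≥0) = (∑' n, g n : ℝ≥0) := ENNReal.coe_injective this
  rw [← NNReal.coe_tsum, ← NNReal.coe_tsum, h2]

/-- Hilbert–Schmidt sums are invariant under right composition with an operator whose
adjoint is isometric. -/
private lemma hs_unitary (b : HilbertBasis ℕ ℂ H) (X W : H →L[ℂ] H)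
    (hiso : ∀ v, ‖adjoint W v‖ = ‖v‖) (hX : Summable fun n => ‖X (b n)‖ ^ 2) :
    (Summable fun n => ‖X (W (b n))‖ ^ 2) ∧
      ∑' n, ‖X (W (b n))‖ ^ 2 = ∑' n, ‖X (b n)‖ ^ 2 := by
  have key : ∑' n, (‖X (W (b n))‖₊ : ℝ≥0∞) ^ 2 = ∑' n, (‖X (b n)‖₊ : ℝ≥0∞) ^ 2 := by
    calc ∑' n, (‖X (W (b n))‖₊ : ℝ≥0∞) ^ 2
        = ∑' n, (‖(X ∘L W) (b n)‖₊ : ℝ≥0∞) ^ 2 := by simp [comp_apply]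
      _ = ∑' n, (‖adjoint (X ∘L W) (b n)‖₊ : ℝ≥0∞) ^ 2 := hs_swap b _
      _ = ∑' n, (‖adjoint X (b n)‖₊ : ℝ≥0∞) ^ 2 := by
          refine tsum_congr fun n => ?_
          rw [adjoint_comp]
          congr 2
          refine NNReal.coe_injective ?_
          simp only [coe_nnnorm, comp_apply]
          exact hiso _
      _ = ∑' n, (‖X (b n)‖₊ : ℝ≥0∞) ^ 2 := (hs_swap b X).symm
  have hXnn : Summable fun n => (‖X (b n)‖₊ ^ 2 : ℝ≥0) := by
    rw [← NNReal.summable_coe]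
    simpa [NNReal.coe_pow] using hX
  have key' : ∑' n, ((‖X (W (b n))‖₊ ^ 2 : ℝ≥0) : ℝ≥0∞) =
      ∑' n, ((‖X (b n)‖₊ ^ 2 : ℝ≥0) : ℝ≥0∞) := by
    simpa [ENNReal.coe_pow] using key
  obtain ⟨hs, ht⟩ := summable_tsum_of_enn_eq key' hXnn
  constructor
  · have e : (fun n => ‖X (W (b n))‖ ^ 2) = fun n => ((‖X (W (b n))‖₊ ^ 2 : ℝ≥0) : ℝ) := by
      funext n; simp [NNReal.coe_pow]
    rw [e]
    exact NNReal.summable_coe.mpr hs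
  · have e1 : (fun n => ‖X (W (b n))‖ ^ 2) = fun n => ((‖X (W (b n))‖₊ ^ 2 : ℝ≥0) : ℝ) := by
      funext n; simp [NNReal.coe_pow]
    have e2 : (fun n => ‖X (b n)‖ ^ 2) = fun n => ((‖X (b n)‖₊ ^ 2 : ℝ≥0) : ℝ) := by
      funext n; simp [NNReal.coe_pow]
    rw [e1, e2]
    exact ht

end Aux

/-- **Putnam–Fuglede for *-paranormal operators modulo Hilbert–Schmidt class.**
If `A` is a *-paranormal operator on a complex Hilbert space `H`, `U` is unitary,
and `X` is a Hilbert–Schmidt operator with `A X = X U`, then `A* X = X U*`. -/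
theorem starParanormal_putnam_fuglede
    {H : Type*} [NormedAddCommGroup H] [InnerProductSpace ℂ H] [CompleteSpace H]
    (A U X : H →L[ℂ] H)
    (hA : ∀ x : H, ‖adjoint A x‖ ^ 2 ≤ ‖A (A x)‖ * ‖x‖)
    (hU : adjoint U ∘L U = 1 ∧ U ∘L adjoint U = 1)
    (hX : ∃ b : HilbertBasis ℕ ℂ H, Summable fun n => ‖X (b n)‖ ^ 2)
    (hAX : A ∘L X = X ∘L U) :
    adjoint A ∘L X = X ∘L adjoint U := by
  obtain ⟨b, hsum⟩ := hX
  have hAXp : ∀ v, A (X v) = X (U v) := by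
    intro v
    have := ContinuousLinearMap.ext_iff.mp hAX v
    simpa [comp_apply] using this
  have hUU' : ∀ v, U (adjoint U v) = v := by
    intro v
    have := ContinuousLinearMap.ext_iff.mp hU.2 v
    simpa [comp_apply] using this
  -- the adjoint of U is isometric
  have hisoU : ∀ v, ‖adjoint U v‖ = ‖v‖ := by
    intro v
    have h1 : (inner ℂ (adjoint U v) (adjoint U v) : ℂ) = inner ℂ v v := by
      rw [adjoint_inner_left, hUU']
    have h2 : RCLike.re (inner ℂ (adjoint U v) (adjoint U v) : ℂ) =
        RCLike.re (inner ℂ v v : ℂ) := by rw [h1]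
    rw [inner_self_eq_norm_sq, inner_self_eq_norm_sq] at h2
    nlinarith [norm_nonneg (adjoint U v), norm_nonneg v]
  -- sums over U bₙ and U³ bₙ
  have hS1 := hs_unitary b X U hisoU hsum
  have hisoU3 : ∀ v, ‖adjoint (U ∘L U ∘L U) v‖ = ‖v‖ := by
    intro v
    simp only [adjoint_comp, comp_apply]
    rw [hisoU, hisoU, hisoU]
  have hS3' := hs_unitary b X (U ∘L U ∘L U) hisoU3 hsum
  have hS3 : (Summable fun n => ‖X (U (U (U (b n))))‖ ^ 2) ∧
      ∑' n, ‖X (U (U (U (b n))))‖ ^ 2 = ∑' n, ‖X (b n)‖ ^ 2 := by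
    simpa [comp_apply] using hS3'
  set S := ∑' n, ‖X (b n)‖ ^ 2 with hSdef
  -- pointwise *-paranormal bound plus AM-GM
  have h1 : ∀ n, ‖adjoint A (X (U (b n)))‖ ^ 2 ≤
      (‖X (U (U (U (b n))))‖ ^ 2 + ‖X (U (b n))‖ ^ 2) / 2 := by
    intro n
    have hp := hA (X (U (b n)))
    rw [hAXp, hAXp] at hp
    nlinarith [sq_nonneg (‖X (U (U (U (b n))))‖ - ‖X (U (b n))‖)]
  have sBound : Summable fun n =>
      (‖X (U (U (U (b n))))‖ ^ 2 + ‖X (U (b n))‖ ^ 2) / 2 :=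
    (hS3.1.add hS1.1).div_const 2
  have sA : Summable fun n => ‖adjoint A (X (U (b n)))‖ ^ 2 :=
    Summable.of_nonneg_of_le (fun n => sq_nonneg _) h1 sBound
  have tA : ∑' n, ‖adjoint A (X (U (b n)))‖ ^ 2 ≤ S := by
    have := Summable.tsum_le_tsum h1 sA sBound
    have hrhs : ∑' n, (‖X (U (U (U (b n))))‖ ^ 2 + ‖X (U (b n))‖ ^ 2) / 2 = S := by
      rw [tsum_div_const, Summable.tsum_add hS3.1 hS1.1, hS3.2, hS1.2]
      ring
    linarith [this, hrhs.le, hrhs.ge]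
  -- expansion of the squared norm of the difference
  have h2 : ∀ n, ‖adjoint A (X (U (b n))) - X (b n)‖ ^ 2 =
      ‖adjoint A (X (U (b n)))‖ ^ 2 - 2 * ‖X (U (b n))‖ ^ 2 + ‖X (b n)‖ ^ 2 := by
    intro n
    have hns := norm_sub_sq (𝕜 := ℂ) (adjoint A (X (U (b n)))) (X (b n))
    have hinner : RCLike.re (inner ℂ (adjoint A (X (U (b n)))) (X (b n)) : ℂ) =
        ‖X (U (b n))‖ ^ 2 := by
      rw [adjoint_inner_left, hAXp, inner_self_eq_norm_sq]
    rw [hns, hinner]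
  have sf : Summable fun n => ‖adjoint A (X (U (b n))) - X (b n)‖ ^ 2 := by
    rw [show (fun n => ‖adjoint A (X (U (b n))) - X (b n)‖ ^ 2) =
        fun n => ‖adjoint A (X (U (b n)))‖ ^ 2 - 2 * ‖X (U (b n))‖ ^ 2 + ‖X (b n)‖ ^ 2
      from funext h2]
    exact (sA.sub (hS1.1.mul_left 2)).add hsum
  have tf : ∑' n, ‖adjoint A (X (U (b n))) - X (b n)‖ ^ 2 ≤ 0 := by
    have heq : ∑' n, ‖adjoint A (X (U (b n))) - X (b n)‖ ^ 2 =
        (∑' n, ‖adjoint A (X (U (b n)))‖ ^ 2) - 2 * S + S := by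
      rw [tsum_congr h2, Summable.tsum_add (sA.sub (hS1.1.mul_left 2)) hsum,
        Summable.tsum_sub sA (hS1.1.mul_left 2), tsum_mul_left, hS1.2]
    rw [heq]; linarith
  have hzero : ∀ n, adjoint A (X (U (b n))) = X (b n) := by
    intro n
    have hle := Summable.le_tsum sf n (fun j _ => sq_nonneg _)
    have : ‖adjoint A (X (U (b n))) - X (b n)‖ ^ 2 = 0 := le_antisymm (hle.trans tf) (sq_nonneg _)
    have := (pow_eq_zero_iff two_ne_zero).mp this
    rwa [norm_eq_zero, sub_eq_zero] at this
  -- conclude operator equality on a dense subspace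
  have hop : adjoint A ∘L (X ∘L U) = X := by
    refine ContinuousLinearMap.ext_on
      (Submodule.dense_iff_topologicalClosure_eq_top.mpr b.dense_span) ?_
    rintro x ⟨n, rfl⟩
    simpa [comp_apply] using hzero n
  ext v
  have := ContinuousLinearMap.ext_iff.mp hop (adjoint U v)
  simp only [comp_apply] at this ⊢
  rw [hUU'] at this
  exact this
end

section
/- Let T be a bounded linear operator on a complex Hilbert space H that is *-paranormal (i.e. ‖T*x‖² ≤ ‖T²x‖·‖x‖ for all x ∈ H). If x ∈ H and λ ∈ ℂ satisfy T x = λ x, then T* x = conj(λ) x. -/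
open ContinuousLinearMap

/-- If `T` is a *-paranormal operator on a complex Hilbert space and `T x = λ x`,
then `T* x = conj(λ) x`. -/
theorem starParanormal_eigenvector_adjoint
    {H : Type*} [NormedAddCommGroup H] [InnerProductSpace ℂ H] [CompleteSpace H]
    (T : H →L[ℂ] H)
    (hT : ∀ y : H, ‖adjoint T y‖ ^ 2 ≤ ‖T (T y)‖ * ‖y‖)
    (x : H) (lam : ℂ) (hx : T x = lam • x) :
    adjoint T x = (starRingEnd ℂ) lam • x := by
  have h1 : ‖adjoint T x‖ ^ 2 ≤ ‖lam‖ ^ 2 * ‖x‖ ^ 2 := by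
    have h := hT x
    rw [hx, map_smul, hx, smul_smul] at h
    rw [norm_smul] at h
    calc ‖adjoint T x‖ ^ 2 ≤ ‖lam * lam‖ * ‖x‖ * ‖x‖ := h
      _ = ‖lam‖ ^ 2 * ‖x‖ ^ 2 := by rw [norm_mul]; ring
  have hinner : RCLike.re (inner ℂ (adjoint T x) ((starRingEnd ℂ) lam • x) : ℂ)
      = ‖lam‖ ^ 2 * ‖x‖ ^ 2 := by
    have key : (inner ℂ (adjoint T x) ((starRingEnd ℂ) lam • x) : ℂ)
        = ((‖lam‖ ^ 2 * ‖x‖ ^ 2 : ℝ) : ℂ) := by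
      rw [inner_smul_right, adjoint_inner_left, hx, inner_smul_right,
        inner_self_eq_norm_sq_to_K, ← mul_assoc, mul_comm ((starRingEnd ℂ) lam) lam,
        Complex.mul_conj']
      push_cast
      rfl
    rw [key]
    exact RCLike.ofReal_re _
  have hsq : ‖adjoint T x - (starRingEnd ℂ) lam • x‖ ^ 2 ≤ 0 := by
    have := @norm_sub_sq ℂ H _ _ _ (adjoint T x) ((starRingEnd ℂ) lam • x)
    rw [this, hinner]
    have : ‖(starRingEnd ℂ) lam • x‖ ^ 2 = ‖lam‖ ^ 2 * ‖x‖ ^ 2 := by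
      rw [norm_smul]; simp [mul_pow]
    rw [this]
    nlinarith [h1]
  have : adjoint T x - (starRingEnd ℂ) lam • x = 0 := by
    have hnn : (0:ℝ) ≤ ‖adjoint T x - (starRingEnd ℂ) lam • x‖ ^ 2 := sq_nonneg _
    have : ‖adjoint T x - (starRingEnd ℂ) lam • x‖ = 0 := by nlinarith
    exact norm_eq_zero.mp this
  exact sub_eq_zero.mp this
end

section
/- There exists a bounded linear operator T on ℓ²(ℕ, ℂ) satisfying, for all x ∈ ℓ²(ℕ, ℂ): (Tx)₀ = x₀ + x₁, (Tx)₁ = x₁, (Tx)₂ = x₁, and (Tx)ₙ = √8 · xₙ₋₁ for all n ≥ 3; moreover this operator T is paranormal, i.e. ‖Tx‖² ≤ ‖T²x‖·‖x‖ for all x ∈ ℓ²(ℕ, ℂ). -/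
open scoped ENNReal

noncomputable section ParanormalAux

/-- The coordinate action of our operator. -/
def Tfun (x : ℕ → ℂ) : ℕ → ℂ := fun n =>
  if n = 0 then x 0 + x 1
  else if n = 1 then x 1
  else if n = 2 then x 1
  else (Real.sqrt 8 : ℂ) * x (n - 1)

lemma Tfun_zero (x : ℕ → ℂ) : Tfun x 0 = x 0 + x 1 := rfl
lemma Tfun_one (x : ℕ → ℂ) : Tfun x 1 = x 1 := rfl
lemma Tfun_two (x : ℕ → ℂ) : Tfun x 2 = x 1 := rfl
lemma Tfun_add3 (x : ℕ → ℂ) (n : ℕ) :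
    Tfun x (n + 3) = (Real.sqrt 8 : ℂ) * x (n + 2) := by
  unfold Tfun
  rw [if_neg (by omega), if_neg (by omega), if_neg (by omega)]
  norm_num

lemma Tfun_add (x y : ℕ → ℂ) : Tfun (x + y) = Tfun x + Tfun y := by
  funext n
  rcases n with _ | _ | _ | n
  · simp [Tfun_zero]; ring
  · simp [Tfun_one]
  · simp [Tfun_two]
  · simp only [Pi.add_apply, Tfun_add3]; ring

lemma Tfun_smul (c : ℂ) (x : ℕ → ℂ) : Tfun (c • x) = c • Tfun x := by
  funext n
  rcases n with _ | _ | _ | n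
  · simp [Tfun_zero]; ring
  · simp [Tfun_one]
  · simp [Tfun_two]
  · simp only [Pi.smul_apply, Tfun_add3, smul_eq_mul]; ring

lemma norm_sqrt8_sq : ‖((Real.sqrt 8 : ℝ) : ℂ)‖ ^ 2 = 8 := by
  rw [Complex.norm_real]
  rw [Real.norm_eq_abs, abs_of_nonneg (Real.sqrt_nonneg _), Real.sq_sqrt (by norm_num)]


lemma summable_Tfun {x : ℕ → ℂ} (hx : Summable fun n => ‖x n‖ ^ 2) :
    Summable fun n => ‖Tfun x n‖ ^ 2 := by
  rw [← summable_nat_add_iff 3]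
  have h : (fun n => ‖Tfun x (n + 3)‖ ^ 2)
      = fun n => 8 * ‖x (n + 2)‖ ^ 2 := by
    funext n
    rw [Tfun_add3, norm_mul, mul_pow, norm_sqrt8_sq]
  rw [h]
  exact ((summable_nat_add_iff (f := fun n => ‖x n‖ ^ 2) 2).mpr hx).mul_left 8

lemma memℓp_two_iff (f : ℕ → ℂ) :
    Memℓp f 2 ↔ Summable fun n => ‖f n‖ ^ 2 := by
  rw [memℓp_gen_iff (p := 2) (by norm_num)]
  have h : (fun i => ‖f i‖ ^ (2 : ℝ≥0∞).toReal) = fun n => ‖f n‖ ^ 2 := by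
    funext n
    rw [show ((2 : ℝ≥0∞).toReal) = ((2 : ℕ) : ℝ) by norm_num, Real.rpow_natCast]
  rw [h]

lemma tsum_split2 (f : ℕ → ℝ) (hf : Summable f) :
    ∑' n, f n = f 0 + f 1 + ∑' n, f (n + 2) := by
  rw [← Summable.sum_add_tsum_nat_add 2 hf]
  simp [Finset.sum_range_succ]

lemma tsum_split3 (f : ℕ → ℝ) (hf : Summable f) :
    ∑' n, f n = f 0 + f 1 + f 2 + ∑' n, f (n + 3) := by
  rw [← Summable.sum_add_tsum_nat_add 3 hf]
  simp [Finset.sum_range_succ]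

lemma tsum_norm_Tfun {x : ℕ → ℂ} (hx : Summable fun n => ‖x n‖ ^ 2) :
    ∑' n, ‖Tfun x n‖ ^ 2
      = ‖x 0 + x 1‖ ^ 2 + 2 * ‖x 1‖ ^ 2 + 8 * ∑' n, ‖x (n + 2)‖ ^ 2 := by
  rw [tsum_split3 _ (summable_Tfun hx)]
  have h : (fun n => ‖Tfun x (n + 3)‖ ^ 2) = fun n => 8 * ‖x (n + 2)‖ ^ 2 := by
    funext n; rw [Tfun_add3, norm_mul, mul_pow, norm_sqrt8_sq]
  rw [show (∑' n, ‖Tfun x (n+3)‖ ^ 2) = ∑' n, 8 * ‖x (n + 2)‖ ^ 2 from by rw [h],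
    tsum_mul_left, Tfun_zero, Tfun_one, Tfun_two]
  ring

lemma tsum_norm_Tfun_tail {x : ℕ → ℂ} (hx : Summable fun n => ‖x n‖ ^ 2) :
    ∑' n, ‖Tfun x (n + 2)‖ ^ 2
      = ‖x 1‖ ^ 2 + 8 * ∑' n, ‖x (n + 2)‖ ^ 2 := by
  have hsum : Summable fun n => ‖Tfun x (n + 2)‖ ^ 2 :=
    (summable_nat_add_iff (f := fun n => ‖Tfun x n‖ ^ 2) 2).mpr (summable_Tfun hx)
  rw [← Summable.sum_add_tsum_nat_add 1 hsum]
  have h : (fun n => ‖Tfun x (n + 1 + 2)‖ ^ 2) = fun n => 8 * ‖x (n + 2)‖ ^ 2 := by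
    funext n
    rw [show n + 1 + 2 = n + 3 from rfl, Tfun_add3, norm_mul, mul_pow, norm_sqrt8_sq]
  rw [show (∑' n, ‖Tfun x (n + 1 + 2)‖ ^ 2) = ∑' n, 8 * ‖x (n + 2)‖ ^ 2 from by rw [h],
    tsum_mul_left]
  simp [Tfun_two]


lemma complex_norm_sq (z : ℂ) : ‖z‖ ^ 2 = z.re ^ 2 + z.im ^ 2 := by
  rw [Complex.sq_norm, Complex.normSq_apply]; ring

lemma bound_aux (p q : ℂ) (s : ℝ) (hs : 0 ≤ s) :
    ‖p + q‖ ^ 2 + 2 * ‖q‖ ^ 2 + 8 * s ≤ 9 * (‖p‖ ^ 2 + ‖q‖ ^ 2 + s) := by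
  simp only [complex_norm_sq, Complex.add_re, Complex.add_im]
  nlinarith [sq_nonneg (p.re - q.re), sq_nonneg (p.im - q.im), sq_nonneg p.re,
    sq_nonneg p.im, sq_nonneg q.re, sq_nonneg q.im]

lemma key_aux (p q : ℂ) (s : ℝ) (hs : 0 ≤ s) :
    (‖p + q‖ ^ 2 + 2 * ‖q‖ ^ 2 + 8 * s) ^ 2 ≤
      (‖p + q + q‖ ^ 2 + 10 * ‖q‖ ^ 2 + 64 * s) * (‖p‖ ^ 2 + ‖q‖ ^ 2 + s) := by
  simp only [complex_norm_sq, Complex.add_re, Complex.add_im]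
  nlinarith [sq_nonneg (p.re * q.im - p.im * q.re),
    mul_nonneg hs (sq_nonneg (p.re - q.re)), mul_nonneg hs (sq_nonneg (p.im - q.im)),
    sq_nonneg (5 * (p.re * q.re + p.im * q.im) - 4 * (q.re ^ 2 + q.im ^ 2)),
    mul_nonneg hs (sq_nonneg p.re), mul_nonneg hs (sq_nonneg p.im),
    mul_nonneg hs (sq_nonneg q.re), mul_nonneg hs (sq_nonneg q.im),
    sq_nonneg (q.re ^ 2), sq_nonneg (q.im ^ 2), sq_nonneg (q.re * q.im)]

lemma sq_le_sq_imp {a b : ℝ} (_ha : 0 ≤ a) (hb : 0 ≤ b) (h : a ^ 2 ≤ b ^ 2) : a ≤ b := by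
  nlinarith

lemma summable_of_lp (f : lp (fun _ : ℕ => ℂ) 2) : Summable fun n => ‖f n‖ ^ 2 :=
  (memℓp_two_iff _).1 (lp.memℓp f)

lemma lp_norm_sq (f : lp (fun _ : ℕ => ℂ) 2) : ‖f‖ ^ 2 = ∑' n, ‖f n‖ ^ 2 := by
  have h := lp.norm_rpow_eq_tsum (p := 2) (by norm_num) f
  rw [show ((2 : ℝ≥0∞).toReal) = ((2 : ℕ) : ℝ) by norm_num] at h
  simp_rw [Real.rpow_natCast] at h
  exact h

/-- The operator as a linear map. -/
def TL : lp (fun _ : ℕ => ℂ) 2 →ₗ[ℂ] lp (fun _ : ℕ => ℂ) 2 where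
  toFun x := ⟨Tfun ⇑x, (memℓp_two_iff _).2 (summable_Tfun (summable_of_lp x))⟩
  map_add' x y := Subtype.ext (Tfun_add ⇑x ⇑y)
  map_smul' c x := Subtype.ext (Tfun_smul c ⇑x)

lemma TL_apply (x : lp (fun _ : ℕ => ℂ) 2) (n : ℕ) : (TL x) n = Tfun ⇑x n := rfl

lemma TL_norm_sq (x : lp (fun _ : ℕ => ℂ) 2) :
    ‖TL x‖ ^ 2 = ‖x 0 + x 1‖ ^ 2 + 2 * ‖x 1‖ ^ 2 + 8 * ∑' n, ‖x (n + 2)‖ ^ 2 := by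
  rw [lp_norm_sq]
  exact tsum_norm_Tfun (summable_of_lp x)

lemma TL_bound (x : lp (fun _ : ℕ => ℂ) 2) : ‖TL x‖ ≤ 3 * ‖x‖ := by
  have hS : 0 ≤ ∑' n, ‖x (n + 2)‖ ^ 2 := tsum_nonneg fun n => sq_nonneg _
  have h1 := TL_norm_sq x
  have h2 : ‖x‖ ^ 2 = ‖x 0‖ ^ 2 + ‖x 1‖ ^ 2 + ∑' n, ‖x (n + 2)‖ ^ 2 := by
    rw [lp_norm_sq]; exact tsum_split2 _ (summable_of_lp x)
  apply sq_le_sq_imp (norm_nonneg _) (by positivity)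
  rw [mul_pow, h1]
  calc ‖x 0 + x 1‖ ^ 2 + 2 * ‖x 1‖ ^ 2 + 8 * ∑' n, ‖x (n + 2)‖ ^ 2
      ≤ 9 * (‖x 0‖ ^ 2 + ‖x 1‖ ^ 2 + ∑' n, ‖x (n + 2)‖ ^ 2) := bound_aux _ _ _ hS
    _ = 3 ^ 2 * ‖x‖ ^ 2 := by rw [h2]; ring

end ParanormalAux

/-- There exists a bounded operator `T` on `ℓ²(ℕ, ℂ)` with
`(Tx)₀ = x₀ + x₁`, `(Tx)₁ = x₁`, `(Tx)₂ = x₁` and `(Tx)ₙ = √8 · xₙ₋₁` for `n ≥ 3`,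
and this operator is paranormal: `‖Tx‖² ≤ ‖T²x‖·‖x‖` for all `x`. -/
theorem exists_paranormal_shiftlike :
    ∃ T : lp (fun _ : ℕ => ℂ) 2 →L[ℂ] lp (fun _ : ℕ => ℂ) 2,
      (∀ x : lp (fun _ : ℕ => ℂ) 2,
        (T x) 0 = x 0 + x 1 ∧ (T x) 1 = x 1 ∧ (T x) 2 = x 1 ∧
        ∀ n : ℕ, 3 ≤ n → (T x) n = (Real.sqrt 8 : ℂ) * x (n - 1)) ∧
      ∀ x : lp (fun _ : ℕ => ℂ) 2, ‖T x‖ ^ 2 ≤ ‖T (T x)‖ * ‖x‖ := by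
  refine ⟨TL.mkContinuous 3 TL_bound, fun x => ⟨rfl, rfl, rfl, fun n hn => ?_⟩,
    fun x => ?_⟩
  · obtain ⟨m, rfl⟩ : ∃ m, n = m + 3 := ⟨n - 3, by omega⟩
    show Tfun ⇑x (m + 3) = _
    rw [Tfun_add3]
    congr 1
  · set T : lp (fun _ : ℕ => ℂ) 2 →L[ℂ] lp (fun _ : ℕ => ℂ) 2 :=
      TL.mkContinuous 3 TL_bound with hT
    have hx := summable_of_lp x
    have hS : 0 ≤ ∑' n, ‖x (n + 2)‖ ^ 2 := tsum_nonneg fun n => sq_nonneg _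
    have hTx : ‖T x‖ ^ 2
        = ‖x 0 + x 1‖ ^ 2 + 2 * ‖x 1‖ ^ 2 + 8 * ∑' n, ‖x (n + 2)‖ ^ 2 :=
      TL_norm_sq x
    have h3 : (∑' n, ‖(T x) (n + 2)‖ ^ 2)
        = ‖x 1‖ ^ 2 + 8 * ∑' n, ‖x (n + 2)‖ ^ 2 := tsum_norm_Tfun_tail hx
    have hTTx : ‖T (T x)‖ ^ 2
        = ‖x 0 + x 1 + x 1‖ ^ 2 + 10 * ‖x 1‖ ^ 2 + 64 * ∑' n, ‖x (n + 2)‖ ^ 2 := by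
      have h := TL_norm_sq (T x)
      rw [h3, show (T x) 0 = x 0 + x 1 from rfl, show (T x) 1 = x 1 from rfl] at h
      rw [show ‖T (T x)‖ = ‖TL (T x)‖ from rfl, h]
      ring
    have hX : ‖x‖ ^ 2 = ‖x 0‖ ^ 2 + ‖x 1‖ ^ 2 + ∑' n, ‖x (n + 2)‖ ^ 2 := by
      rw [lp_norm_sq]; exact tsum_split2 _ hx
    apply sq_le_sq_imp (by positivity) (by positivity)
    rw [mul_pow, hTx, hTTx, hX]
    exact key_aux _ _ _ hS
end

section
/- The operator T on ℓ²(ℕ, ℂ) defined by (Tx)₀ = x₀ + x₁, (Tx)₁ = x₁, (Tx)₂ = x₁, and (Tx)ₙ = √8 · xₙ₋₁ for all n ≥ 3 satisfies T e₀ = e₀ and T* e₀ = e₀ + e₁, where (eₙ) is the standard orthonormal basis of ℓ²(ℕ, ℂ); in particular, e₀ is an eigenvector of T for the eigenvalue 1 but is not an eigenvector of T* for the eigenvalue 1, so T is not *-paranormal. -/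
open ContinuousLinearMap

/-- The operator `T` on `ℓ²(ℕ, ℂ)` given by `(Tx)₀ = x₀ + x₁`, `(Tx)₁ = x₁`,
`(Tx)₂ = x₁`, `(Tx)ₙ = √8 · xₙ₋₁` for `n ≥ 3` satisfies `T e₀ = e₀` and
`T* e₀ = e₀ + e₁` (where `eₙ` is the standard orthonormal basis); in particular `e₀`
is an eigenvector of `T` for `1` but not of `T*` for `1`, so `T` is not *-paranormal. -/
theorem shiftlike_not_starParanormal
    (T : lp (fun _ : ℕ => ℂ) 2 →L[ℂ] lp (fun _ : ℕ => ℂ) 2)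
    (hT : ∀ x : lp (fun _ : ℕ => ℂ) 2,
      (T x) 0 = x 0 + x 1 ∧ (T x) 1 = x 1 ∧ (T x) 2 = x 1 ∧
      ∀ n : ℕ, 3 ≤ n → (T x) n = (Real.sqrt 8 : ℂ) * x (n - 1)) :
    T (lp.single 2 0 1) = lp.single 2 0 1 ∧
    adjoint T (lp.single 2 0 1) = lp.single 2 0 1 + lp.single 2 1 1 ∧
    adjoint T (lp.single 2 0 1) ≠ lp.single 2 0 1 ∧
    ¬ (∀ x : lp (fun _ : ℕ => ℂ) 2, ‖adjoint T x‖ ^ 2 ≤ ‖T (T x)‖ * ‖x‖) := by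
  set e0 : lp (fun _ : ℕ => ℂ) 2 := lp.single 2 0 1 with he0
  set e1 : lp (fun _ : ℕ => ℂ) 2 := lp.single 2 1 1 with he1
  have he0app : ∀ j : ℕ, e0 j = if j = 0 then 1 else 0 := by
    intro j
    by_cases h : j = 0
    · subst h; simp [he0, lp.single_apply_self]
    · rw [if_neg h]; exact lp.single_apply_ne 2 0 _ h
  have hT0 : T e0 = e0 := by
    obtain ⟨h0, h1, h2, h3⟩ := hT e0
    refine lp.ext (funext fun n => ?_)
    match n with
    | 0 => rw [h0, he0app 0, he0app 1]; norm_num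
    | 1 => rw [h1]
    | 2 => rw [h2, he0app 1, he0app 2]; simp
    | (m+3) =>
        rw [h3 (m+3) (by omega), he0app (m+3-1), he0app (m+3)]
        simp
  have hadj : adjoint T e0 = e0 + e1 := by
    refine ext_inner_left ℂ fun x => ?_
    rw [adjoint_inner_right]
    obtain ⟨h0, _, _, _⟩ := hT x
    rw [inner_add_right]
    rw [he0, he1, lp.inner_single_right, lp.inner_single_right, lp.inner_single_right, h0]
    simp [inner, mul_add]
  have he1ne : e0 + e1 ≠ e0 := by
    intro h
    have : e1 = 0 := by
      have := congrArg (fun v => v - e0) h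
      simpa [add_sub_cancel_left] using this
    have h1 : e1 1 = 1 := lp.single_apply_self 2 1 1
    rw [this] at h1
    simp at h1
  have hne0 : ‖e0‖ = 1 := by
    have := lp.norm_single (E := fun _ : ℕ => ℂ) (p := 2) (by norm_num) 0 (1 : ℂ)
    simpa [he0] using this
  have hinner01 : (inner ℂ e0 e1 : ℂ) = 0 := by
    rw [he1, lp.inner_single_right, he0app 1]
    simp
  have hnorm : ‖e0 + e1‖ ^ 2 = 2 := by
    have hne1 : ‖e1‖ = 1 := by
      have := lp.norm_single (E := fun _ : ℕ => ℂ) (p := 2) (by norm_num) 1 (1 : ℂ)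
      simpa [he1] using this
    have := norm_add_sq (𝕜 := ℂ) e0 e1
    rw [hinner01] at this
    rw [this, hne0, hne1]
    norm_num
  refine ⟨hT0, hadj, by rw [hadj]; exact he1ne, ?_⟩
  intro h
  have := h e0
  rw [hadj, hT0, hT0, hnorm, hne0] at this
  norm_num at this
end
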